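/- Let SC_k^{n,4} = (s_i)_{i=0}^{3} be a simple closed k-curve with 4 elements in ℤⁿ, n ≥ 2, and let p : ℤ → {s₀,s₁,s₂,s₃} be given by p(t) = s_{t mod 4}, where ℤ carries the 2-adjacency. Then p is a local (2,k)-isomorphism. -/
import Mathlib


/-- Two points of `ℤⁿ` are `k(t,n)`-adjacent if they are distinct, at most `t` of their
coordinates differ by exactly `1` in absolute value, and all other coordinates coincide. -/
def DigAdj {n : ℕ} (t : ℕ) (p q : Fin n → ℤ) : Prop :=
  p ≠ q ∧ (∀ i, p i = q i ∨ |p i - q i| = 1) ∧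
    (Finset.univ.filter fun i => p i ≠ q i).card ≤ t

/-- The adjacency relation induced on a digital image `X ⊆ ℤⁿ`. -/
def adjOn {n : ℕ} (t : ℕ) (X : Set (Fin n → ℤ)) (x y : X) : Prop :=
  DigAdj t (x : Fin n → ℤ) (y : Fin n → ℤ)

/-- Digital `(k₁,k₂)`-continuity of a map between digital images. -/
def DigContinuous {n₁ n₂ : ℕ} (t₁ t₂ : ℕ) (X : Set (Fin n₁ → ℤ)) (Y : Set (Fin n₂ → ℤ))
    (f : X → Y) : Prop :=
  ∀ x x' : X, adjOn t₁ X x x' → f x = f x' ∨ adjOn t₂ Y (f x) (f x')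

/-- There is a `k`-path of length at most `ε` (w.r.t. an adjacency `adj`) from `x` to `y`;
equivalently, the length `l_k(x,y)` of a shortest `k`-path from `x` to `y` is at most `ε`. -/
def reachesIn {α : Type*} (adj : α → α → Prop) (x y : α) (ε : ℕ) : Prop :=
  ∃ l, l ≤ ε ∧ ∃ c : ℕ → α, c 0 = x ∧ c l = y ∧ ∀ i, i < l → adj (c i) (c (i + 1))

/-- The digital neighborhood `N_k(x₀, ε) = {x : l_k(x₀,x) ≤ ε} ∪ {x₀}`. -/
def Nbd {α : Type*} (adj : α → α → Prop) (x₀ : α) (ε : ℕ) : Set α :=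
  {x | reachesIn adj x₀ x ε} ∪ {x₀}

/-- `f` maps `A` `(k₁,k₂)`-isomorphically onto `B`: the restriction of `f` is a bijection
from `A` onto `B` which is `(k₁,k₂)`-continuous and whose inverse is `(k₂,k₁)`-continuous. -/
def IsIsoOn {α β : Type*} (adjA : α → α → Prop) (adjB : β → β → Prop)
    (f : α → β) (A : Set α) (B : Set β) : Prop :=
  Set.BijOn f A B ∧
    (∀ x ∈ A, ∀ x' ∈ A, adjA x x' → f x = f x' ∨ adjB (f x) (f x')) ∧
    (∀ x ∈ A, ∀ x' ∈ A, adjB (f x) (f x') → x = x' ∨ adjA x x')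

/-- A local `(k₁,k₂)`-isomorphism: for every `x ∈ X`, `h` maps `N_{k₁}(x,1)`
`(k₁,k₂)`-isomorphically onto `N_{k₂}(h(x),1)`. -/
def LocalIso {n₁ n₂ : ℕ} (t₁ t₂ : ℕ) (X : Set (Fin n₁ → ℤ)) (Y : Set (Fin n₂ → ℤ))
    (h : X → Y) : Prop :=
  ∀ x : X, IsIsoOn (adjOn t₁ X) (adjOn t₂ Y) h
    (Nbd (adjOn t₁ X) x 1) (Nbd (adjOn t₂ Y) (h x) 1)

/-- A simple closed `k`-curve `SC_k^{n,l}` with `l` elements in `ℤⁿ`: a sequence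
`(s_i)_{i=0}^{l-1}` of distinct points such that `s_i` and `s_j` are `k`-adjacent
if and only if `i - j ≡ ±1 (mod l)`. -/
def IsSC {n : ℕ} (t l : ℕ) (s : ZMod l → (Fin n → ℤ)) : Prop :=
  Function.Injective s ∧
    ∀ i j : ZMod l, DigAdj t (s i) (s j) ↔ (i = j + 1 ∨ j = i + 1)

lemma mem_nbd_one {α : Type*} (adj : α → α → Prop) (x y : α) :
    y ∈ Nbd adj x 1 ↔ y = x ∨ adj x y := by
  constructor
  · rintro (⟨l, hl, c, hc0, hcl, hadj⟩ | h)
    · interval_cases l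
      · left; rw [← hcl, hc0]
      · right; have := hadj 0 (by norm_num); rwa [hc0, hcl] at this
    · left; exact h
  · rintro (rfl | h)
    · right; rfl
    · left
      exact ⟨1, le_refl 1, fun i => if i = 0 then x else y, by simp, by simp,
        fun i hi => by interval_cases i; simpa using h⟩

lemma habs1 : ∀ u v : ℤ, u = v + 1 ∨ v = u + 1 → |u - v| = 1 := by
  rintro u v (rfl | rfl) <;> simp

lemma habs2 : ∀ u v : ℤ, |u - v| = 1 → u = v + 1 ∨ v = u + 1 := by
  intro u v h
  have := (abs_eq (by norm_num : (0:ℤ) ≤ 1)).mp h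
  omega

lemma hdvd4 : ∀ u v : ℤ, ((u : ZMod 4) = (v : ZMod 4)) → (4:ℤ) ∣ v - u := by
  intro u v h
  exact ((ZMod.intCast_eq_intCast_iff _ _ _).mp h).dvd


/-- for `l = 4`, the map `p : ℤ → SC_k^{n,4}`, `p(t) = s_{t mod 4}`,
where `ℤ = ℤ¹` carries the `2 = k(1,1)`-adjacency, is a local `(2,k)`-isomorphism. -/
theorem sc4_covering_localIso
    {n t : ℕ} (hn : 2 ≤ n) (ht : 1 ≤ t) (htn : t ≤ n)
    (s : ZMod 4 → (Fin n → ℤ)) (hs : IsSC t 4 s) :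
    LocalIso 1 t (Set.univ : Set (Fin 1 → ℤ)) (Set.range s)
      (fun x => ⟨s (((x : Fin 1 → ℤ) 0 : ℤ) : ZMod 4), Set.mem_range_self _⟩) := by
  obtain ⟨hinj, hadj⟩ := hs
  intro x
  set a : ℤ := (x : Fin 1 → ℤ) 0 with ha
  set m : ZMod 4 := (a : ZMod 4) with hm
  have fin1 : ∀ p q : Fin 1 → ℤ, p 0 = q 0 → p = q := by
    intro p q h; funext i
    have : i = 0 := Subsingleton.elim i 0
    rw [this]; exact h
  have adjX : ∀ u v : ↥(Set.univ : Set (Fin 1 → ℤ)),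
      adjOn 1 Set.univ u v ↔ |(u : Fin 1 → ℤ) 0 - (v : Fin 1 → ℤ) 0| = 1 := by
    intro u v
    constructor
    · rintro ⟨hne, hco, -⟩
      rcases hco 0 with h | h
      · exact absurd (fin1 _ _ h) hne
      · exact h
    · intro h
      refine ⟨?_, ?_, ?_⟩
      · intro he
        rw [he, sub_self, abs_zero] at h
        exact one_ne_zero h.symm
      · intro i
        have : i = 0 := Subsingleton.elim i 0
        rw [this]; right; exact h
      · calc (Finset.univ.filter fun i => (u : Fin 1 → ℤ) i ≠ (v : Fin 1 → ℤ) i).card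
            ≤ Finset.univ.card := Finset.card_filter_le _ _
          _ = 1 := by simp
  have hA : ∀ u : ↥(Set.univ : Set (Fin 1 → ℤ)),
      u ∈ Nbd (adjOn 1 Set.univ) x 1 ↔
        ((u : Fin 1 → ℤ) 0 = a ∨ |a - (u : Fin 1 → ℤ) 0| = 1) := by
    intro u
    rw [mem_nbd_one, adjX]
    constructor
    · rintro (rfl | h)
      · left; rfl
      · right; exact h
    · rintro (h | h)
      · left; exact Subtype.ext (fin1 _ _ (h.trans ha))
      · right; exact h
  have hB : ∀ y : ↥(Set.range s),
      y ∈ Nbd (adjOn t (Set.range s)) ⟨s m, Set.mem_range_self m⟩ 1 ↔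
        ((y : Fin n → ℤ) = s m ∨ (y : Fin n → ℤ) = s (m - 1) ∨
          (y : Fin n → ℤ) = s (m + 1)) := by
    intro y
    obtain ⟨j, hj⟩ := y.2
    rw [mem_nbd_one]
    constructor
    · rintro (h | h)
      · left; rw [h]
      · have h2 : DigAdj t (s m) (s j) := by
          have h3 : DigAdj t (s m) ((y : Fin n → ℤ)) := h
          rwa [← hj] at h3
        rcases (hadj m j).mp h2 with h3 | h3
        · right; left
          have : j = m - 1 := by rw [h3]; ring
          rw [← hj, this]
        · right; right
          rw [← hj, h3]
    · rintro (h | h | h)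
      · left; exact Subtype.ext h
      · right
        show DigAdj t (s m) ((y : Fin n → ℤ))
        rw [h]
        exact (hadj m (m - 1)).mpr (Or.inl (by ring))
      · right
        show DigAdj t (s m) ((y : Fin n → ℤ))
        rw [h]
        exact (hadj m (m + 1)).mpr (Or.inr rfl)
  have hrange : ∀ b : ℤ, (b = a ∨ |a - b| = 1) → a - 1 ≤ b ∧ b ≤ a + 1 := by
    rintro b (rfl | h)
    · omega
    · have := abs_le.mp h.le; omega
  refine ⟨⟨?_, ?_, ?_⟩, ?_, ?_⟩
  · -- MapsTo
    intro u hu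
    rw [hA] at hu
    refine (hB _).mpr ?_
    have hb : (u : Fin 1 → ℤ) 0 = a ∨ (u : Fin 1 → ℤ) 0 = a - 1 ∨
        (u : Fin 1 → ℤ) 0 = a + 1 := by
      rcases hu with h | h
      · left; exact h
      · have := (abs_eq (by norm_num : (0:ℤ) ≤ 1)).mp h; omega
    show s (((u : Fin 1 → ℤ) 0 : ℤ) : ZMod 4) = s m ∨
      s (((u : Fin 1 → ℤ) 0 : ℤ) : ZMod 4) = s (m - 1) ∨
      s (((u : Fin 1 → ℤ) 0 : ℤ) : ZMod 4) = s (m + 1)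
    rcases hb with h | h | h
    · left; rw [h, hm]
    · right; left; rw [h]; congr 1; rw [hm]; push_cast; ring
    · right; right; rw [h]; congr 1; rw [hm]; push_cast; ring
  · -- InjOn
    intro u hu v hv huv
    rw [hA] at hu hv
    have h1 : s (((u : Fin 1 → ℤ) 0 : ℤ) : ZMod 4) = s (((v : Fin 1 → ℤ) 0 : ℤ) : ZMod 4) :=
      Subtype.ext_iff.mp huv
    have h2 := hdvd4 _ _ (hinj h1)
    obtain ⟨hu1, hu2⟩ := hrange _ hu
    obtain ⟨hv1, hv2⟩ := hrange _ hv
    exact Subtype.ext (fin1 _ _ (by omega))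
  · -- SurjOn
    intro y hy
    rcases (hB y).mp hy with h | h | h
    · exact ⟨x, (hA x).mpr (Or.inl rfl), Subtype.ext (by rw [h])⟩
    · refine ⟨⟨fun _ => a - 1, trivial⟩, (hA _).mpr ?_, Subtype.ext ?_⟩
      · right
        show |a - (a - 1)| = 1
        rw [show a - (a - 1) = 1 from by ring]; exact abs_one
      · show s (((a - 1 : ℤ)) : ZMod 4) = (y : Fin n → ℤ)
        rw [h]; congr 1; rw [hm]; push_cast; ring
    · refine ⟨⟨fun _ => a + 1, trivial⟩, (hA _).mpr ?_, Subtype.ext ?_⟩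
      · right
        show |a - (a + 1)| = 1
        rw [show a - (a + 1) = -1 from by ring, abs_neg]; exact abs_one
      · show s (((a + 1 : ℤ)) : ZMod 4) = (y : Fin n → ℤ)
        rw [h]; congr 1; rw [hm]; push_cast; ring
  · -- continuity
    intro u hu v hv huv
    rw [adjX] at huv
    right
    show DigAdj t (s (((u : Fin 1 → ℤ) 0 : ℤ) : ZMod 4))
      (s (((v : Fin 1 → ℤ) 0 : ℤ) : ZMod 4))
    apply (hadj _ _).mpr
    rcases habs2 _ _ huv with h | h
    · left; rw [h]; push_cast; ring
    · right; rw [h]; push_cast; ring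
  · -- inverse continuity
    intro u hu v hv huv
    rw [hA] at hu hv
    obtain ⟨hu1, hu2⟩ := hrange _ hu
    obtain ⟨hv1, hv2⟩ := hrange _ hv
    have h2 : DigAdj t (s (((u : Fin 1 → ℤ) 0 : ℤ) : ZMod 4))
        (s (((v : Fin 1 → ℤ) 0 : ℤ) : ZMod 4)) := huv
    right
    rw [adjX]
    apply habs1
    rcases (hadj _ _).mp h2 with h | h
    · left
      have h3 : (((u : Fin 1 → ℤ) 0 : ℤ) : ZMod 4) =
          ((((v : Fin 1 → ℤ) 0 + 1 : ℤ)) : ZMod 4) := by push_cast; exact h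
      have := hdvd4 _ _ h3
      omega
    · right
      have h3 : (((v : Fin 1 → ℤ) 0 : ℤ) : ZMod 4) =
          ((((u : Fin 1 → ℤ) 0 + 1 : ℤ)) : ZMod 4) := by push_cast; exact h
      have := hdvd4 _ _ h3
      omega
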